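/- Let A be an integral Noetherian ring, a₁, ..., a_r a regular sequence in A generating the ideal I = (a₁,...,a_r), and let R = A[X₂, ..., X_r]/J with J generated by a_j − X_j·a₁ for 2 ≤ j ≤ r. For f ∈ A with image f̄ in R and any d ≥ 0: f ∈ I^d if and only if f̄ lies in the ideal generated by ā₁^d, where ā₁ is the image of a₁ in R. -/

import Mathlib

open MvPolynomial

section Helpers
variable {A : Type*} [CommRing A]

lemma prodPowMemPow {ι : Type*} (J : Ideal A) (x : ι → A) (e : ι → ℕ)
    (s : Finset ι) (hx : ∀ i ∈ s, x i ∈ J) :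
    (∏ i ∈ s, x i ^ e i) ∈ J ^ (∑ i ∈ s, e i) := by
  classical
  induction s using Finset.induction with
  | empty => simp [Ideal.one_eq_top]
  | @insert i s hi ih =>
    rw [Finset.prod_insert hi, Finset.sum_insert hi, pow_add]
    exact Ideal.mul_mem_mul (Ideal.pow_mem_pow (hx i (Finset.mem_insert_self i s)) _)
      (ih fun j hj => hx j (Finset.mem_insert_of_mem hj))

variable {m : ℕ} (a : Fin m → A)

/-- ideal generated by first `k` of the `aᵢ` -/
noncomputable def blowIk (k : ℕ) : Ideal A := Ideal.span (a '' {i | (i : ℕ) < k})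

/-- `F` only uses variables of index `< k` -/
def blowLow (k : ℕ) (F : MvPolynomial (Fin m) A) : Prop :=
  ∀ σ ∈ F.support, ∀ i : Fin m, k ≤ (i : ℕ) → σ i = 0

lemma degree_eq_of_homog {F : MvPolynomial (Fin m) A} {n : ℕ} (hF : F.IsHomogeneous n)
    {σ : Fin m →₀ ℕ} (hσ : σ ∈ F.support) : ∑ i ∈ σ.support, σ i = n := by
  have := hF (MvPolynomial.mem_support_iff.mp hσ)
  rw [← Finsupp.degree_apply, Finsupp.degree_eq_weight_one]
  exact this

lemma aeval_mem_of_coeff_mem (J : Ideal A) {k n : ℕ} {F : MvPolynomial (Fin m) A}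
    (hc : ∀ σ, F.coeff σ ∈ J) (hF : F.IsHomogeneous n) (hlow : blowLow k F) :
    aeval a F ∈ J * (blowIk a k) ^ n := by
  have hrep : aeval a F = ∑ σ ∈ F.support, F.coeff σ * (σ.prod fun i e => a i ^ e) := by
    conv_lhs => rw [← F.support_sum_monomial_coeff]
    rw [map_sum]
    refine Finset.sum_congr rfl fun σ _ => ?_
    rw [aeval_monomial]
    simp
  rw [hrep]
  refine Ideal.sum_mem _ fun σ hσ => ?_
  have h1 : (σ.prod fun i e => a i ^ e) ∈ (blowIk a k) ^ n := by
    rw [Finsupp.prod, ← degree_eq_of_homog hF hσ]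
    refine prodPowMemPow _ _ _ _ fun i hi => ?_
    refine Ideal.subset_span ⟨i, ?_, rfl⟩
    by_contra h
    exact (Finsupp.mem_support_iff.mp hi) (hlow σ hσ i (le_of_not_gt h))
  exact Ideal.mul_mem_mul (hc σ) h1




lemma myDegree_add (s t : Fin m →₀ ℕ) : (s + t).degree = s.degree + t.degree := by
  simp [Finsupp.degree_eq_weight_one, map_add]

lemma myDegree_single (i : Fin m) : (Finsupp.single i 1).degree = 1 := by
  exact Finsupp.degree_single i 1

lemma isHomog_iff {F : MvPolynomial (Fin m) A} {n : ℕ} :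
    F.IsHomogeneous n ↔ ∀ σ : Fin m →₀ ℕ, F.coeff σ ≠ 0 → σ.degree = n := by
  unfold MvPolynomial.IsHomogeneous MvPolynomial.IsWeightedHomogeneous
  rw [Finsupp.degree_eq_weight_one]
  exact Iff.rfl


lemma blowLow_C (k : ℕ) (c : A) : blowLow k (C c : MvPolynomial (Fin m) A) := by
  intro σ hσ i _
  have h := MvPolynomial.mem_support_iff.mp hσ
  rw [coeff_C] at h
  by_cases h0 : σ = 0
  · simp [h0]
  · simp [h0] at h
    exact absurd h.1.symm h0

lemma blowLow_zero (k : ℕ) : blowLow k (0 : MvPolynomial (Fin m) A) := by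
  intro σ hσ i _
  simp at hσ

lemma blowLow_add {k : ℕ} {p q : MvPolynomial (Fin m) A} (hp : blowLow k p)
    (hq : blowLow k q) : blowLow k (p + q) := by
  classical
  intro σ hσ i hi
  rcases Finset.mem_union.mp (MvPolynomial.support_add hσ) with h | h
  · exact hp σ h i hi
  · exact hq σ h i hi

lemma blowLow_neg {k : ℕ} {p : MvPolynomial (Fin m) A} (hp : blowLow k p) :
    blowLow k (-p) := by
  intro σ hσ i hi
  exact hp σ (by simpa using hσ) i hi

lemma blowLow_mul {k : ℕ} {p q : MvPolynomial (Fin m) A} (hp : blowLow k p)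
    (hq : blowLow k q) : blowLow k (p * q) := by
  classical
  intro σ hσ i hi
  obtain ⟨σ₁, h₁, σ₂, h₂, rfl⟩ := Finset.mem_add.mp (MvPolynomial.support_mul p q hσ)
  simp [hp σ₁ h₁ i hi, hq σ₂ h₂ i hi]

lemma blowLow_X {k : ℕ} {i : Fin m} (h : (i : ℕ) < k) :
    blowLow k (X i : MvPolynomial (Fin m) A) := by
  intro σ hσ j hj
  have h1 := MvPolynomial.mem_support_iff.mp hσ
  rw [MvPolynomial.coeff_X'] at h1
  by_cases he : Finsupp.single i 1 = σ
  · subst he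
    exact Finsupp.single_eq_of_ne' (fun hij => by simp [← hij] at hj; omega)
  · simp [he] at h1

lemma blowLow_mono {k k' : ℕ} (hk : k ≤ k') {p : MvPolynomial (Fin m) A}
    (hp : blowLow k p) : blowLow k' p :=
  fun σ hσ i hi => hp σ hσ i (le_trans hk hi)

/-- every element of `(blowIk a k)^n` is the value of a homogeneous polynomial of
degree `n` in the first `k` variables -/
lemma exists_homog_rep {k n : ℕ} {x : A} (hx : x ∈ blowIk a k ^ n) :
    ∃ F : MvPolynomial (Fin m) A, F.IsHomogeneous n ∧ blowLow k F ∧ aeval a F = x := by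
  induction n generalizing x with
  | zero =>
    exact ⟨C x, isHomogeneous_C _ _, blowLow_C _ _, by simp⟩
  | succ n ih =>
    rw [pow_succ] at hx
    refine Submodule.mul_induction_on hx ?_ ?_
    · intro p hp q hq
      obtain ⟨F, hFh, hFl, hFe⟩ := ih hp
      have hq' : ∃ G : MvPolynomial (Fin m) A,
          G.IsHomogeneous 1 ∧ blowLow k G ∧ aeval a G = q := by
        refine Submodule.span_induction ?_ ?_ ?_ ?_ hq
        · rintro y ⟨i, hi, rfl⟩
          exact ⟨X i, isHomogeneous_X _ _, blowLow_X hi, by simp⟩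
        · exact ⟨0, isHomogeneous_zero _ _ _, blowLow_zero _, by simp⟩
        · rintro y z - - ⟨G₁, h1, l1, e1⟩ ⟨G₂, h2, l2, e2⟩
          exact ⟨G₁ + G₂, h1.add h2, blowLow_add l1 l2, by rw [map_add, e1, e2]⟩
        · rintro c y - ⟨G, h1, l1, e1⟩
          refine ⟨C c * G, by simpa using (isHomogeneous_C (Fin m) c).mul h1,
            blowLow_mul (blowLow_C _ _) l1, by rw [map_mul, e1]; simp [smul_eq_mul]⟩
      obtain ⟨G, hGh, hGl, hGe⟩ := hq'
      exact ⟨F * G, hFh.mul hGh, blowLow_mul hFl hGl, by rw [map_mul, hFe, hGe]⟩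
    · rintro x y ⟨F₁, h1, l1, e1⟩ ⟨F₂, h2, l2, e2⟩
      exact ⟨F₁ + F₂, h1.add h2, blowLow_add l1 l2, by rw [map_add, e1, e2]⟩

lemma eq_C_of_coeff {F : MvPolynomial (Fin m) A}
    (h : ∀ σ : Fin m →₀ ℕ, σ ≠ 0 → F.coeff σ = 0) : F = C (F.coeff 0) := by
  classical
  ext τ
  rw [coeff_C]
  split_ifs with ht
  · rw [← ht]
  · exact h τ (fun hc => ht hc.symm)

lemma homog_divMonomial {F : MvPolynomial (Fin m) A} {n : ℕ} {i : Fin m}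
    (hF : F.IsHomogeneous (n + 1)) :
    (F.divMonomial (Finsupp.single i 1)).IsHomogeneous n := by
  rw [isHomog_iff] at hF ⊢
  intro σ hσ
  rw [coeff_divMonomial] at hσ
  have h2 := hF _ hσ
  rw [myDegree_add, myDegree_single] at h2
  omega

lemma homog_modMonomial {F : MvPolynomial (Fin m) A} {n : ℕ} {s : Fin m →₀ ℕ}
    (hF : F.IsHomogeneous n) : (F.modMonomial s).IsHomogeneous n := by
  rw [isHomog_iff] at hF ⊢
  intro σ hσ
  by_cases h : s ≤ σ
  · rw [coeff_modMonomial_of_le _ h] at hσ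
    exact absurd rfl hσ
  · rw [coeff_modMonomial_of_not_le _ h] at hσ
    exact hF _ hσ

lemma blowLow_divMonomial {k : ℕ} {F : MvPolynomial (Fin m) A} {j : Fin m}
    (hF : blowLow k F) : blowLow k (F.divMonomial (Finsupp.single j 1)) := by
  intro σ hσ i hi
  have h := MvPolynomial.mem_support_iff.mp hσ
  rw [coeff_divMonomial] at h
  have h2 := hF _ (MvPolynomial.mem_support_iff.mpr h) i hi
  rw [Finsupp.add_apply] at h2
  omega

lemma blowLow_modMonomial {k : ℕ} {F : MvPolynomial (Fin m) A} (hk : k < m)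
    (hF : blowLow (k + 1) F) :
    blowLow k (F.modMonomial (Finsupp.single (⟨k, hk⟩ : Fin m) 1)) := by
  intro σ hσ i hi
  have h := MvPolynomial.mem_support_iff.mp hσ
  by_cases hle : Finsupp.single (⟨k, hk⟩ : Fin m) 1 ≤ σ
  · rw [coeff_modMonomial_of_le _ hle] at h
    exact absurd rfl h
  · rw [coeff_modMonomial_of_not_le _ hle] at h
    by_cases hik : (i : ℕ) = k
    · have h1 : ¬ (1 ≤ σ ⟨k, hk⟩) := fun hc => hle (Finsupp.single_le_iff.mpr hc)
      have h2 : σ ⟨k, hk⟩ = 0 := by omega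
      have hieq : i = (⟨k, hk⟩ : Fin m) := Fin.ext hik
      rw [hieq]
      exact h2
    · exact hF σ (MvPolynomial.mem_support_iff.mpr h) i (by omega)

lemma blowIk_mono {k k' : ℕ} (h : k ≤ k') : blowIk a k ≤ blowIk a k' :=
  Ideal.span_mono (Set.image_mono (fun i hi => lt_of_lt_of_le hi h))

lemma blowIk_zero : blowIk a 0 = ⊥ := by
  have : (a '' {i | (i : ℕ) < 0}) = ∅ := by
    ext x; simp
  rw [blowIk, this, Ideal.span_empty]

lemma aeval_split (j : Fin m) (F : MvPolynomial (Fin m) A) :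
    aeval a F = a j * aeval a (F.divMonomial (Finsupp.single j 1)) +
      aeval a (F.modMonomial (Finsupp.single j 1)) := by
  conv_lhs => rw [← divMonomial_add_modMonomial F (Finsupp.single j 1)]
  rw [map_add, map_mul, aeval_monomial]
  simp

/-- Quasi-regularity: a homogeneous degree-`n` polynomial in the first `k` variables whose
value lies in `(blowIk a k)^(n+1)` has all coefficients in `blowIk a k`. -/
lemma quasiReg (hreg : RingTheory.Sequence.IsWeaklyRegular A (List.ofFn a)) :
    ∀ k, k ≤ m → ∀ (n : ℕ) (F : MvPolynomial (Fin m) A), F.IsHomogeneous n → blowLow k F →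
      aeval a F ∈ blowIk a k ^ (n + 1) → ∀ σ, F.coeff σ ∈ blowIk a k := by
  intro k
  induction k with
  | zero =>
    intro _ n F hFh hFl hFe σ
    rw [blowIk_zero] at hFe ⊢
    have hcz : ∀ τ : Fin m →₀ ℕ, τ ≠ 0 → F.coeff τ = 0 := by
      intro τ hτ
      by_contra hc
      have := hFl τ (MvPolynomial.mem_support_iff.mpr hc)
      exact hτ (Finsupp.ext fun i => this i (Nat.zero_le _))
    by_cases hσ : σ = 0
    · subst hσ
      have hFC := eq_C_of_coeff hcz
      rw [hFC] at hFe
      simp only [aeval_C] at hFe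
      have hbot : (⊥ : Ideal A) ^ (n + 1) = ⊥ := by
        rw [eq_bot_iff]
        exact le_trans (Ideal.pow_le_pow_right (Nat.le_add_left 1 n))
          (pow_one (⊥ : Ideal A)).le
      rw [hbot] at hFe
      simpa using hFe
    · rw [hcz σ hσ]
      exact Submodule.zero_mem ⊥
  | succ k ihk =>
    intro hk1
    have hk : k < m := hk1
    set b := a ⟨k, hk⟩ with hbdef
    -- b is a nonzerodivisor modulo blowIk a k
    have hb : ∀ x : A, b * x ∈ blowIk a k → x ∈ blowIk a k := by
      have hsr := hreg.regular_mod_prev k (by rw [List.length_ofFn]; exact hk)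
      have hgetk : (List.ofFn a)[k]'(by rw [List.length_ofFn]; exact hk) = b := by
        simp [List.getElem_ofFn, hbdef]
      have hofl : Ideal.ofList ((List.ofFn a).take k) = blowIk a k := by
        unfold Ideal.ofList blowIk
        congr 1
        ext x
        simp only [Set.mem_setOf_eq, List.mem_take_iff_getElem, List.getElem_take,
          List.getElem_ofFn, List.length_ofFn, Set.mem_image]
        constructor
        · rintro ⟨i, hi, rfl⟩
          exact ⟨⟨i, by omega⟩, by simpa using (by omega : i < k), rfl⟩
        · rintro ⟨i, hi, rfl⟩
          exact ⟨(i : ℕ), by omega, rfl⟩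
      rw [hgetk, hofl] at hsr
      intro x hx
      have h1 : (Submodule.Quotient.mk (b * x) :
          A ⧸ (blowIk a k • ⊤ : Submodule A A)) = 0 := by
        rw [Submodule.Quotient.mk_eq_zero, Ideal.smul_top_eq_map]
        simpa [Ideal.map_id] using hx
      have h2 : b • (Submodule.Quotient.mk x :
          A ⧸ (blowIk a k • ⊤ : Submodule A A)) = b • 0 := by
        rw [smul_zero, ← Submodule.Quotient.mk_smul, smul_eq_mul]
        exact h1
      have h3 := hsr h2
      rw [Submodule.Quotient.mk_eq_zero, Ideal.smul_top_eq_map] at h3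
      simpa [Ideal.map_id] using h3
    -- b is a nonzerodivisor modulo every power of blowIk a k
    have hcolon : ∀ (n : ℕ) (x : A), b * x ∈ blowIk a k ^ n → x ∈ blowIk a k ^ n := by
      intro n
      induction n with
      | zero => intro x _; simp [Ideal.one_eq_top]
      | succ n ihn =>
        intro x hx
        have hxn : x ∈ blowIk a k ^ n :=
          ihn x (Ideal.pow_le_pow_right (Nat.le_succ n) hx)
        obtain ⟨G, hGh, hGl, hGe⟩ := exists_homog_rep a hxn
        have hbG : aeval a (C b * G) ∈ blowIk a k ^ (n + 1) := by
          rw [map_mul, aeval_C, Algebra.algebraMap_self_apply, hGe]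
          exact hx
        have hcoeff := ihk (le_of_lt hk) n (C b * G)
          (by simpa using (isHomogeneous_C (Fin m) b).mul hGh)
          (blowLow_mul (blowLow_C _ _) hGl) hbG
        have hGc : ∀ σ, G.coeff σ ∈ blowIk a k := by
          intro σ
          have := hcoeff σ
          rw [coeff_C_mul] at this
          exact hb _ this
        have := aeval_mem_of_coeff_mem a (blowIk a k) hGc hGh hGl
        rw [hGe] at this
        rw [pow_succ']
        exact this
    -- main inner induction on the degree n
    intro n
    induction n with
    | zero =>
      intro F hFh hFl hFe σ
      have hcz : ∀ τ : Fin m →₀ ℕ, τ ≠ 0 → F.coeff τ = 0 := by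
        intro τ hτ
        by_contra hc
        rw [isHomog_iff] at hFh
        exact hτ ((Finsupp.degree_eq_zero_iff τ).mp (hFh τ hc))
      by_cases hσ : σ = 0
      · subst hσ
        have hFC := eq_C_of_coeff hcz
        rw [hFC] at hFe
        simp only [aeval_C] at hFe
        rw [pow_one] at hFe
        simpa using hFe
      · rw [hcz σ hσ]
        exact Submodule.zero_mem _
    | succ n ihn =>
      intro F hFh hFl hFe σ
      set s : Fin m →₀ ℕ := Finsupp.single (⟨k, hk⟩ : Fin m) 1 with hsdef
      obtain ⟨P, hPh, hPl, hPe⟩ := exists_homog_rep a hFe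
      have eF := aeval_split a (⟨k, hk⟩ : Fin m) F
      have eP := aeval_split a (⟨k, hk⟩ : Fin m) P
      rw [hPe] at eP
      -- memberships of the "mod" parts
      have hg : aeval a (F.modMonomial s) ∈ blowIk a k ^ (n + 1) := by
        have := aeval_mem_of_coeff_mem a ⊤ (fun σ => trivial)
          (homog_modMonomial hFh) (blowLow_modMonomial hk hFl)
        rwa [← Ideal.one_eq_top, one_mul] at this
      have hp0 : aeval a (P.modMonomial s) ∈ blowIk a k ^ (n + 2) := by
        have := aeval_mem_of_coeff_mem a ⊤ (fun σ => trivial)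
          (homog_modMonomial hPh) (blowLow_modMonomial hk hPl)
        rwa [← Ideal.one_eq_top, one_mul] at this
      have hkey : b * (aeval a (P.divMonomial s) - aeval a (F.divMonomial s)) =
          aeval a (F.modMonomial s) - aeval a (P.modMonomial s) := by
        linear_combination eF - eP
      have hdiff : aeval a (P.divMonomial s) - aeval a (F.divMonomial s) ∈
          blowIk a k ^ (n + 1) := by
        refine hcolon (n + 1) _ ?_
        rw [hkey]
        exact Submodule.sub_mem _ hg (Ideal.pow_le_pow_right (Nat.le_succ _) hp0)
      have hp1 : aeval a (P.divMonomial s) ∈ blowIk a (k + 1) ^ (n + 1) := by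
        have := aeval_mem_of_coeff_mem a ⊤ (fun σ => trivial)
          (homog_divMonomial (i := ⟨k, hk⟩) hPh) (blowLow_divMonomial (j := ⟨k, hk⟩) hPl)
        rwa [← Ideal.one_eq_top, one_mul] at this
      have hh : aeval a (F.divMonomial s) ∈ blowIk a (k + 1) ^ (n + 1) := by
        have h2 : aeval a (F.divMonomial s) =
            aeval a (P.divMonomial s) -
              (aeval a (P.divMonomial s) - aeval a (F.divMonomial s)) := by ring
        rw [h2]
        exact Submodule.sub_mem _ hp1
          (Ideal.pow_right_mono (blowIk_mono a (Nat.le_succ k)) _ hdiff)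
      -- coefficients of the div part, by the inner induction hypothesis
      have hHq : ∀ τ, (F.divMonomial s).coeff τ ∈ blowIk a (k + 1) :=
        ihn (F.divMonomial s) (homog_divMonomial hFh) (blowLow_divMonomial hFl) hh
      -- coefficients of the mod part
      obtain ⟨K, hKh, hKl, hKe⟩ := exists_homog_rep a hdiff
      have hGb : aeval a (F.modMonomial s - C b * K) ∈ blowIk a k ^ (n + 2) := by
        have he : aeval a (F.modMonomial s - C b * K) = aeval a (P.modMonomial s) := by
          rw [map_sub, map_mul, aeval_C, hKe]
          have : (algebraMap A A) b = b := rfl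
          rw [this]
          linear_combination eP - eF
        rw [he]
        exact hp0
      have hGbc := ihk (le_of_lt hk) (n + 1) (F.modMonomial s - C b * K)
        ((homog_modMonomial hFh).sub (by simpa using (isHomogeneous_C (Fin m) b).mul hKh))
        (by rw [sub_eq_add_neg]
            exact blowLow_add (blowLow_modMonomial hk hFl)
              (blowLow_neg (blowLow_mul (blowLow_C _ _) hKl)))
        hGb
      have hGc : ∀ τ, (F.modMonomial s).coeff τ ∈ blowIk a (k + 1) := by
        intro τ
        have h1 := hGbc τ
        rw [coeff_sub, coeff_C_mul] at h1
        have hbmem : b ∈ blowIk a (k + 1) :=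
          Ideal.subset_span ⟨⟨k, hk⟩, by simp, rfl⟩
        have h2 : (F.modMonomial s).coeff τ =
            ((F.modMonomial s).coeff τ - b * K.coeff τ) + b * K.coeff τ := by ring
        rw [h2]
        exact Submodule.add_mem _ (blowIk_mono a (Nat.le_succ k) h1)
          (Ideal.mul_mem_right _ _ hbmem)
      -- combine
      have hsplitc : F.coeff σ = (monomial s 1 * F.divMonomial s).coeff σ +
          (F.modMonomial s).coeff σ := by
        conv_lhs => rw [← divMonomial_add_modMonomial F s]
        rw [coeff_add]
      rw [hsplitc]
      refine Submodule.add_mem _ ?_ (hGc σ)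
      rw [mul_comm, coeff_mul_monomial']
      split_ifs with hle
      · rw [mul_one]
        exact hHq _
      · exact Submodule.zero_mem _

lemma blowIk_top : blowIk a m = Ideal.span (Set.range a) := by
  unfold blowIk
  congr 1
  ext x
  constructor
  · rintro ⟨i, -, rfl⟩
    exact ⟨i, rfl⟩
  · rintro ⟨i, rfl⟩
    exact ⟨i, i.isLt, rfl⟩

lemma blowLow_top (F : MvPolynomial (Fin m) A) : blowLow m F :=
  fun _ _ i hi => absurd i.isLt (by omega)

/-- `(I^(e+1) : aⱼ) ⊆ I^e` for a regular sequence. -/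
lemma colon_one (hreg : RingTheory.Sequence.IsWeaklyRegular A (List.ofFn a)) (j : Fin m)
    {e : ℕ} {x : A} (hx : x * a j ∈ Ideal.span (Set.range a) ^ (e + 1)) :
    x ∈ Ideal.span (Set.range a) ^ e := by
  rw [← blowIk_top a] at hx ⊢
  suffices h : ∀ i, i ≤ e → x ∈ blowIk a m ^ i from h e le_rfl
  intro i
  induction i with
  | zero => intro _; rw [pow_zero, Ideal.one_eq_top]; trivial
  | succ i ih =>
    intro hie
    obtain ⟨G, hGh, hGl, hGe⟩ := exists_homog_rep a (ih (by omega))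
    have hGX : aeval a (G * X j) ∈ blowIk a m ^ ((i + 1) + 1) := by
      refine Ideal.pow_le_pow_right (show i + 1 + 1 ≤ e + 1 by omega) ?_
      rw [map_mul, aeval_X, hGe]
      exact hx
    have hco := quasiReg a hreg m le_rfl (i + 1) (G * X j)
      (by simpa using hGh.mul (isHomogeneous_X _ j)) (blowLow_top _) hGX
    have hGc : ∀ τ, G.coeff τ ∈ blowIk a m := by
      intro τ
      have := hco (τ + Finsupp.single j 1)
      rwa [coeff_mul_X] at this
    have := aeval_mem_of_coeff_mem a (blowIk a m) hGc hGh (blowLow_top _)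
    rw [hGe] at this
    rw [pow_succ']
    exact this

lemma colon_pow (hreg : RingTheory.Sequence.IsWeaklyRegular A (List.ofFn a)) (j : Fin m)
    {d N : ℕ} {x : A} (hx : x * a j ^ N ∈ Ideal.span (Set.range a) ^ (d + N)) :
    x ∈ Ideal.span (Set.range a) ^ d := by
  revert hx
  induction N with
  | zero => intro hx; simpa using hx
  | succ N ih =>
    intro hx
    refine ih (colon_one a hreg j ?_)
    have h1 : x * a j ^ (N + 1) ∈ Ideal.span (Set.range a) ^ ((d + N) + 1) := by
      rw [show (d + N) + 1 = d + (N + 1) by omega]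
      exact hx
    rw [show x * a j ^ (N + 1) = (x * a j ^ N) * a j by ring] at h1
    exact h1

end Helpers

set_option synthInstance.maxHeartbeats 1000000

/-- Let `A` be an integral Noetherian ring, `a₀, a₁, …, a_r` a regular sequence in `A`
generating the ideal `I = (a₀, …, a_r)`, and let `R = A[X₁, …, X_r]/J` with `J`
generated by `a_j − X_j·a₀` for `1 ≤ j ≤ r` (the affine blow-up chart). For `f ∈ A`
with image `f̄` in `R` and any `d ≥ 0`: `f ∈ I^d` if and only if `f̄` lies in the ideal
generated by `ā₀^d`, where `ā₀` is the image of `a₀` in `R`. -/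
theorem mem_pow_iff_image_mem_span_pow (A : Type*) [CommRing A] [IsDomain A]
    [IsNoetherianRing A] (r : ℕ) (a : Fin (r + 1) → A)
    (ha : RingTheory.Sequence.IsRegular A (List.ofFn a))
    (I : Ideal A) (hI : I = Ideal.span (Set.range a))
    (J : Ideal (MvPolynomial (Fin r) A))
    (hJ : J = Ideal.span (Set.range fun j : Fin r => C (a j.succ) - X j * C (a 0)))
    (f : A) (d : ℕ) :
    f ∈ I ^ d ↔
      Ideal.Quotient.mk J (C f) ∈
        Ideal.span {(Ideal.Quotient.mk J (C (a 0))) ^ d} := by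
  subst hI
  have hreg := ha.toIsWeaklyRegular
  constructor
  · intro hf
    have hgen : ∀ i : Fin (r + 1), Ideal.Quotient.mk J (C (a i)) ∈
        Ideal.span {Ideal.Quotient.mk J (C (a 0))} := by
      intro i
      induction i using Fin.cases with
      | zero => exact Ideal.subset_span rfl
      | succ j =>
        have hJmem : (C (a j.succ) - X j * C (a 0)) ∈ J :=
          hJ ▸ Ideal.subset_span ⟨j, rfl⟩
        have h0 : Ideal.Quotient.mk J (C (a j.succ) - X j * C (a 0)) = 0 :=
          Ideal.Quotient.eq_zero_iff_mem.mpr hJmem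
        rw [map_sub, map_mul, sub_eq_zero] at h0
        rw [h0]
        exact Ideal.mul_mem_left _ _ (Ideal.subset_span rfl)
    set φ : A →+* MvPolynomial (Fin r) A ⧸ J :=
      (Ideal.Quotient.mk J).comp (C : A →+* MvPolynomial (Fin r) A) with hφ
    have hmap : Ideal.map φ (Ideal.span (Set.range a)) ≤
        Ideal.span {Ideal.Quotient.mk J (C (a 0))} := by
      rw [Ideal.map_span, Ideal.span_le]
      rintro y ⟨x, ⟨i, rfl⟩, rfl⟩
      exact hgen i
    have h1 : φ f ∈ (Ideal.map φ (Ideal.span (Set.range a))) ^ d := by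
      rw [← Ideal.map_pow]
      exact Ideal.mem_map_of_mem φ hf
    have h2 := Ideal.pow_right_mono hmap d h1
    rwa [Ideal.span_singleton_pow] at h2
  · intro h
    rw [Ideal.mem_span_singleton'] at h
    obtain ⟨z, hz⟩ := h
    obtain ⟨g, rfl⟩ := Ideal.Quotient.mk_surjective z
    have hmem : C f - g * (C (a 0)) ^ d ∈ J := by
      rw [← Ideal.Quotient.eq, map_mul, map_pow]
      exact hz.symm
    have ha0 : a 0 ≠ 0 := by
      intro h0
      have hsr := hreg.regular_mod_prev 0 (by simp)
      have hget : (List.ofFn a)[0]'(by simp) = a 0 := by simp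
      rw [hget, h0] at hsr
      have h2 : (Submodule.Quotient.mk (0 : A) :
          A ⧸ (Ideal.ofList ((List.ofFn a).take 0) • ⊤ : Submodule A A)) =
          Submodule.Quotient.mk 1 := hsr (by simp only [zero_smul])
      rw [Submodule.Quotient.eq] at h2
      simp at h2
    set K := FractionRing A
    have hi : Function.Injective (algebraMap A K) := IsFractionRing.injective A K
    have hia0 : algebraMap A K (a 0) ≠ 0 := fun hc => ha0 (hi (by rw [hc, map_zero]))
    set α : Fin r → K :=
      fun j => algebraMap A K (a j.succ) * (algebraMap A K (a 0))⁻¹ with hα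
    have hkill : ∀ p ∈ J, aeval α p = 0 := by
      intro p hp
      rw [hJ] at hp
      have hker : Ideal.span (Set.range fun j : Fin r => C (a j.succ) - X j * C (a 0)) ≤
          RingHom.ker ((aeval α : MvPolynomial (Fin r) A →ₐ[A] K) :
            MvPolynomial (Fin r) A →+* K) := by
        rw [Ideal.span_le]
        rintro q ⟨j, rfl⟩
        rw [SetLike.mem_coe, RingHom.mem_ker]
        show aeval α (C (a j.succ) - X j * C (a 0)) = 0
        rw [map_sub, map_mul, aeval_C, aeval_X, hα]
        rw [aeval_C]
        rw [inv_mul_cancel_right₀ hia0, sub_self]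
      exact RingHom.mem_ker.mp (hker hp)
    have heq : algebraMap A K f = aeval α g * (algebraMap A K (a 0)) ^ d := by
      have h0 := hkill _ hmem
      rw [map_sub, map_mul, map_pow, aeval_C, aeval_C, sub_eq_zero] at h0
      exact h0
    set N := g.totalDegree with hN
    set Gsum : A := ∑ σ ∈ g.support,
      g.coeff σ * (σ.prod fun j e => a j.succ ^ e) * a 0 ^ (N - σ.degree) with hGs
    have hdegle : ∀ σ ∈ g.support, σ.degree ≤ N := by
      intro σ hσ
      have := MvPolynomial.le_totalDegree hσ
      simpa [Finsupp.degree_apply, Finsupp.sum] using this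
    have hkey : (algebraMap A K (a 0)) ^ N * aeval α g = algebraMap A K Gsum := by
      rw [hGs, map_sum]
      conv_lhs => rw [← g.support_sum_monomial_coeff]
      rw [map_sum, Finset.mul_sum]
      refine Finset.sum_congr rfl fun σ hσ => ?_
      have hdeg : σ.degree ≤ N := hdegle σ hσ
      rw [aeval_monomial]
      rw [map_mul, map_mul, map_pow]
      have hprodmap : (algebraMap A K) (σ.prod fun j e => a j.succ ^ e) =
          ∏ j ∈ σ.support, (algebraMap A K (a j.succ)) ^ σ j := by
        rw [Finsupp.prod, map_prod]
        exact Finset.prod_congr rfl fun j _ => map_pow _ _ _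
      have hαprod : (σ.prod fun j e => α j ^ e) =
          (∏ j ∈ σ.support, (algebraMap A K (a j.succ)) ^ σ j) *
            ((algebraMap A K (a 0)) ^ σ.degree)⁻¹ := by
        rw [Finsupp.prod]
        have h1 : ∀ j ∈ σ.support, α j ^ σ j =
            (algebraMap A K (a j.succ)) ^ σ j * ((algebraMap A K (a 0))⁻¹) ^ σ j :=
          fun j _ => by rw [hα, mul_pow]
        rw [Finset.prod_congr rfl h1, Finset.prod_mul_distrib,
          Finset.prod_pow_eq_pow_sum, ← inv_pow]
        rfl
      rw [hprodmap, hαprod]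
      rw [pow_sub₀ _ hia0 hdeg]
      ring
    have hGmem : Gsum ∈ Ideal.span (Set.range a) ^ N := by
      rw [hGs]
      refine Ideal.sum_mem _ fun σ hσ => ?_
      have hdeg : σ.degree ≤ N := hdegle σ hσ
      have h1 : (σ.prod fun j e => a j.succ ^ e) ∈
          Ideal.span (Set.range a) ^ σ.degree := by
        rw [Finsupp.prod]
        have := prodPowMemPow (Ideal.span (Set.range a)) (fun j : Fin r => a j.succ)
          σ σ.support (fun j _ => Ideal.subset_span (Set.mem_range_self j.succ))
        simpa [Finsupp.degree_apply] using this
      have h2 : a 0 ^ (N - σ.degree) ∈ Ideal.span (Set.range a) ^ (N - σ.degree) :=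
        Ideal.pow_mem_pow (Ideal.subset_span (Set.mem_range_self 0)) _
      have h3 := Ideal.mul_mem_mul h1 h2
      rw [← pow_add, show σ.degree + (N - σ.degree) = N by omega] at h3
      rw [mul_assoc]
      exact Ideal.mul_mem_left _ _ h3
    have hAeq : f * a 0 ^ N = Gsum * a 0 ^ d := by
      apply hi
      rw [map_mul, map_mul, map_pow, map_pow, heq, ← hkey]
      ring
    have hmem2 : f * a 0 ^ N ∈ Ideal.span (Set.range a) ^ (d + N) := by
      rw [hAeq, pow_add, mul_comm Gsum]
      exact Ideal.mul_mem_mul (Ideal.pow_mem_pow (Ideal.subset_span (Set.mem_range_self 0)) _) hGmem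
    exact colon_pow a hreg 0 hmem2
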